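/- arXiv:1401.7313 — 5 statements merged into one kernel-verified Lean document; each statement's English description precedes it below -/
import Mathlib

section
/- Define Enc(x) = 01 ∘ x ∘ complement(wt(x)₂), where wt(x) is the number of 1s in x and wt(x)₂ is its binary encoding zero-padded to length ⌈log₂(|x|+1)⌉. Then for all binary strings x, y of equal length with x ≠ y, both tuples (0,1) and (1,0) occur coordinatewise between Enc(x) and Enc(y). -/
private lemma exists_bit_of_lt : ∀ n m : ℕ, m < n →
    ∃ i, m.testBit i = false ∧ n.testBit i = true := by
  intro n
  induction n using Nat.strong_induction_on with
  | _ n ih =>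
    intro m h
    rcases lt_or_eq_of_le (Nat.div_le_div_right (c := 2) (Nat.le_of_lt h)) with h2 | h2
    · obtain ⟨i, hi1, hi2⟩ := ih (n / 2) (Nat.div_lt_self (by omega) one_lt_two) (m / 2) h2
      exact ⟨i + 1, by simpa [Nat.testBit_add_one] using hi1,
        by simpa [Nat.testBit_add_one] using hi2⟩
    · refine ⟨0, ?_, ?_⟩ <;> simp only [Nat.testBit_zero, decide_eq_false_iff_not, decide_eq_true_iff]
      · intro hm1
        have hn1 : n % 2 = 1 := by omega
        omega
      · omega

private lemma count_lt_of_ptwise (x : List Bool) : ∀ y : List Bool,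
    x.length = y.length → x ≠ y → (true, false) ∉ x.zip y →
    x.count true < y.count true := by
  induction x with
  | nil => intro y hl hne _; cases y <;> simp_all
  | cons a xs ih =>
    intro y hl hne hz
    cases y with
    | nil => simp at hl
    | cons b ys =>
      simp only [List.zip_cons_cons, List.mem_cons, not_or] at hz
      obtain ⟨hab, hzs⟩ := hz
      by_cases hxy : xs = ys
      · subst hxy
        have : a ≠ b := fun h => hne (by rw [h])
        have ha : a = false := by cases a <;> cases b <;> simp_all
        have hb : b = true := by cases a <;> cases b <;> simp_all
        subst ha; subst hb; simp [List.count_cons]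
      · have := ih ys (by simpa using hl) hxy hzs
        cases a with
        | false => cases b <;> simp [List.count_cons] <;> omega
        | true =>
          have hb : b = true := by cases b <;> simp_all
          subst hb; simp [List.count_cons]; omega

private lemma exists_ne_pair (x : List Bool) : ∀ y : List Bool,
    x.length = y.length → x ≠ y → ∃ p ∈ x.zip y, p.1 ≠ p.2 := by
  induction x with
  | nil => intro y hl hne; cases y <;> simp_all
  | cons a xs ih =>
    intro y hl hne
    cases y with
    | nil => simp at hl
    | cons b ys =>
      by_cases hab : a = b
      · subst hab
        have hxy : xs ≠ ys := fun h => hne (by rw [h])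
        obtain ⟨p, hp, hp2⟩ := ih ys (by simpa using hl) hxy
        exact ⟨p, by simp [hp], hp2⟩
      · exact ⟨(a, b), by simp, hab⟩

/-- For `Enc x = 01 ∘ x ∘ complement (wt(x)₂)`, where `wt(x)₂` is the binary
encoding of the Hamming weight of `x` zero-padded to length `⌈log₂ (|x|+1)⌉`:
if `x ≠ y` have equal length then both `(0,1)` and `(1,0)` occur
coordinatewise between `Enc x` and `Enc y`. -/
theorem encode_weight_diamond_one (x y : List Bool) (hlen : x.length = y.length)
    (hne : x ≠ y) :
    let Enc : List Bool → List Bool := fun z =>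
      [false, true] ++ z ++
        (List.range (Nat.clog 2 (z.length + 1))).map
          (fun i => !(Nat.testBit (z.count true) i))
    ((false, true) ∈ (Enc x).zip (Enc y)) ∧ ((true, false) ∈ (Enc x).zip (Enc y)) := by
  intro Enc
  set n := Nat.clog 2 (x.length + 1) with hn
  have hzip : (Enc x).zip (Enc y) =
      ([(false, false), (true, true)] : List (Bool × Bool)) ++ x.zip y ++
        (List.range n).map (fun i => (!(Nat.testBit (x.count true) i),
          !(Nat.testBit (y.count true) i))) := by
    show (([false, true] ++ x) ++ _).zip (([false, true] ++ y) ++ _) = _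
    rw [List.zip_append (by simp [hlen]), List.zip_append (by simp), ← hlen,
      List.zip_map']
    rfl
  have key : ∀ i, Nat.testBit (y.count true) i = true ∨
      Nat.testBit (x.count true) i = true → i < n := by
    intro i hi
    have hx : x.count true ≤ x.length := List.count_le_length
    have hy : y.count true ≤ x.length := hlen ▸ (List.count_le_length : y.count true ≤ y.length)
    have hpow : (2:ℕ) ^ i ≤ x.length := by
      rcases hi with hi | hi
      · by_contra hc
        push_neg at hc
        have := Nat.testBit_eq_false_of_lt (n := y.count true) (i := i) (by omega)
        simp [this] at hi
      · by_contra hc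
        push_neg at hc
        have := Nat.testBit_eq_false_of_lt (n := x.count true) (i := i) (by omega)
        simp [this] at hi
    have h2 : (2:ℕ) ^ i < 2 ^ n := by
      calc (2:ℕ) ^ i ≤ x.length := hpow
        _ < x.length + 1 := Nat.lt_succ_self _
        _ ≤ 2 ^ n := Nat.le_pow_clog one_lt_two _
    exact (Nat.pow_lt_pow_iff_right one_lt_two).mp h2
  rw [hzip]
  by_cases h10 : (true, false) ∈ x.zip y
  · by_cases h01 : (false, true) ∈ x.zip y
    · constructor <;> simp [h10, h01]
    · -- y pointwise ≤ x, counts: y < x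
      have hcount : y.count true < x.count true :=
        count_lt_of_ptwise y x hlen.symm (Ne.symm hne)
          (by
            intro hc
            exact h01 (by
              have h := List.mem_map_of_mem (f := Prod.swap) hc
              rwa [List.zip_swap] at h))
      obtain ⟨i, hi1, hi2⟩ := exists_bit_of_lt _ _ hcount
      have hin : i < n := key i (Or.inr hi2)
      constructor
      · simp only [List.mem_append, List.mem_map, List.mem_range]
        right
        exact ⟨i, hin, by simp [hi1, hi2]⟩
      · simp [h10]
  · -- x pointwise ≤ y
    have h01 : (false, true) ∈ x.zip y := by
      obtain ⟨p, hp, hpne⟩ := exists_ne_pair x y hlen hne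
      obtain ⟨a, b⟩ := p
      cases a <;> cases b <;> simp_all
    have hcount : x.count true < y.count true :=
      count_lt_of_ptwise x y hlen hne h10
    obtain ⟨i, hi1, hi2⟩ := exists_bit_of_lt _ _ hcount
    have hin : i < n := key i (Or.inl hi2)
    constructor
    · simp [h01]
    · simp only [List.mem_append, List.mem_map, List.mem_range]
      right
      exact ⟨i, hin, by simp [hi1, hi2]⟩
end

section
/- If balanced binary strings r and s of the same length are both strictly Catalan (hence 1-minimal) and both 2-maximal, and r ≠ s, then for all cyclic shifts i, j, the pair (S^i r, S^j s) contains both coordinate tuples (0,1) and (1,0), i.e., r ✦₁ s. -/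
open Classical

/-- The "graph" of a binary string: `G z k = Σ_{i<k} (2 z_i - 1)`. -/
def strGraph (z : List Bool) (k : ℕ) : ℤ :=
  ∑ i ∈ Finset.range k, (if z.getD i false then (1 : ℤ) else -1)

/-- `z` is strictly Catalan if it is balanced and `G_z(k) > 0` for `0 < k < ℓ`. -/
def StrictlyCatalan (z : List Bool) : Prop :=
  strGraph z z.length = 0 ∧ ∀ k, 0 < k → k < z.length → 0 < strGraph z k

/-- `z` is `t`-maximal if exactly `t` positions attain the maximum of its graph. -/
noncomputable def TMaximal (z : List Bool) (t : ℕ) : Prop :=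
  ((Finset.range (z.length + 1)).filter
    (fun i => ∀ j ∈ Finset.range (z.length + 1), strGraph z j ≤ strGraph z i)).card = t

/-- Cyclic shift forward by `i` symbols. -/
def cycShift (i : ℕ) (z : List Bool) : List Bool :=
  z.drop (i % z.length) ++ z.take (i % z.length)

lemma cycShift_eq_rotate (i : ℕ) (z : List Bool) : cycShift i z = z.rotate i :=
  (List.rotate_eq_drop_append_take_mod).symm

lemma length_cycShift (i : ℕ) (z : List Bool) : (cycShift i z).length = z.length := by
  rw [cycShift_eq_rotate]; exact List.length_rotate z i

/-- Partial graph of a rotated list in terms of the original graph. -/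
lemma strGraph_drop_take (r : List Bool) (c k : ℕ)
    (hk : k ≤ r.length - c) :
    strGraph (r.drop c ++ r.take c) k = strGraph r (c + k) - strGraph r c := by
  have h1 : ∀ t, t < k →
      ((r.drop c ++ r.take c).getD t false) = r.getD (c + t) false := by
    intro t ht
    have htd : t < (r.drop c).length := by
      rw [List.length_drop]; exact lt_of_lt_of_le ht hk
    rw [List.getD_append _ _ _ _ htd]
    rw [List.getD_eq_getElem?_getD, List.getD_eq_getElem?_getD, List.getElem?_drop]
  unfold strGraph
  rw [Finset.sum_congr rfl (fun t ht => by rw [h1 t (Finset.mem_range.mp ht)])]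
  rw [← Finset.sum_Ico_eq_sub _ (Nat.le_add_right c k)]
  rw [Finset.sum_Ico_eq_sum_range]
  simp

/-- Full graph is invariant under rotation. -/
lemma strGraph_drop_take_full (r : List Bool) (c : ℕ) (hc : c ≤ r.length) :
    strGraph (r.drop c ++ r.take c) r.length = strGraph r r.length := by
  set ℓ := r.length with hℓ
  have hsplit : strGraph (r.drop c ++ r.take c) ℓ =
      strGraph (r.drop c ++ r.take c) (ℓ - c) +
      ∑ t ∈ Finset.Ico (ℓ - c) ℓ, (if (r.drop c ++ r.take c).getD t false then (1:ℤ) else -1) := by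
    unfold strGraph
    rw [Finset.range_eq_Ico,
      ← Finset.sum_Ico_consecutive _ (Nat.zero_le (ℓ - c)) (Nat.sub_le ℓ c)]
    rw [Finset.range_eq_Ico]
  have h2 : ∀ t ∈ Finset.Ico (ℓ - c) ℓ,
      (if (r.drop c ++ r.take c).getD t false then (1:ℤ) else -1) =
      (if r.getD (t - (ℓ - c)) false then (1:ℤ) else -1) := by
    intro t ht
    obtain ⟨ht1, ht2⟩ := Finset.mem_Ico.mp ht
    have hlen : (r.drop c).length = ℓ - c := by rw [List.length_drop]
    rw [List.getD_append_right _ _ _ _ (by rw [hlen]; exact ht1), hlen]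
    have htake : t - (ℓ - c) < c := by omega
    rw [List.getD_eq_getElem?_getD, List.getD_eq_getElem?_getD, List.getElem?_take,
      if_pos htake]
  rw [hsplit, Finset.sum_congr rfl h2,
    strGraph_drop_take r c (ℓ - c) (le_refl _), Nat.add_sub_cancel' hc]
  rw [Finset.sum_Ico_eq_sum_range]
  have h3 : ∀ i ∈ Finset.range (ℓ - (ℓ - c)),
      (if r.getD (ℓ - c + i - (ℓ - c)) false then (1:ℤ) else -1) =
      (if r.getD i false then (1:ℤ) else -1) := by
    intro i _
    have hx : ℓ - c + i - (ℓ - c) = i := by omega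
    rw [hx]
  rw [Finset.sum_congr rfl h3]
  have hcc : ℓ - (ℓ - c) = c := by omega
  rw [hcc]
  unfold strGraph
  ring

/-- A nontrivial rotation of a strictly Catalan string is not strictly Catalan. -/
lemma rotate_not_catalan (r : List Bool) (c : ℕ) (hc0 : 0 < c) (hc : c < r.length)
    (hr : StrictlyCatalan r) (hs : StrictlyCatalan (r.drop c ++ r.take c)) : False := by
  set ℓ := r.length with hℓ
  have hlen : (r.drop c ++ r.take c).length = ℓ := by
    rw [List.length_append, List.length_drop, List.length_take]
    omega
  have hval : strGraph (r.drop c ++ r.take c) (ℓ - c) = - strGraph r c := by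
    rw [strGraph_drop_take r c (ℓ - c) (le_refl _), Nat.add_sub_cancel' hc.le,
      hr.1]
    ring
  have hpos : 0 < strGraph (r.drop c ++ r.take c) (ℓ - c) := by
    apply hs.2
    · omega
    · rw [hlen]; omega
  have hneg : 0 < strGraph r c := hr.2 c hc0 hc
  rw [hval] at hpos
  omega

/-- Distinct strictly Catalan strings of the same length have no common rotation. -/
lemma shifts_ne (r s : List Bool) (hlen : r.length = s.length)
    (hrC : StrictlyCatalan r) (hsC : StrictlyCatalan s) (hne : r ≠ s)
    (i j : ℕ) : cycShift i r ≠ cycShift j s := by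
  set ℓ := r.length with hℓ
  rcases Nat.eq_zero_or_pos ℓ with h0 | hpos
  · refine absurd ?_ hne
    have hr0 : r = [] := List.eq_nil_of_length_eq_zero h0
    have hs0 : s = [] := List.eq_nil_of_length_eq_zero (by omega)
    rw [hr0, hs0]
  intro h
  rw [cycShift_eq_rotate, cycShift_eq_rotate] at h
  have hsl : s.length = ℓ := hlen.symm
  have hs_eq : s = r.rotate (i + (ℓ - j % ℓ)) := by
    have h1 : s = (s.rotate j).rotate (ℓ - j % ℓ) := by
      have h2 : j % ℓ ≤ ℓ := (Nat.mod_lt j hpos).le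
      conv_lhs => rw [← List.rotate_length s]
      rw [← List.rotate_mod s j, List.rotate_rotate, hsl, Nat.add_sub_cancel' h2]
    rw [h1, ← h, List.rotate_rotate]
  set m := i + (ℓ - j % ℓ) with hm
  have hrot : r.rotate m = r.drop (m % ℓ) ++ r.take (m % ℓ) :=
    List.rotate_eq_drop_append_take_mod
  rcases Nat.eq_zero_or_pos (m % ℓ) with hz | hz
  · apply hne
    rw [hs_eq, ← List.rotate_mod, ← hℓ, hz, List.rotate_zero]
  · apply rotate_not_catalan r (m % ℓ) hz (Nat.mod_lt m hpos) hrC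
    rw [← hrot, ← hs_eq]
    exact hsC

/-- If `B ≤ A` pointwise and the full graphs agree, the lists are equal. -/
lemma eq_of_pointwise_le (A B : List Bool) (hlen : A.length = B.length)
    (hsum : strGraph A A.length = strGraph B B.length)
    (hle : ∀ t, t < A.length → B.getD t false = true → A.getD t false = true) :
    A = B := by
  have key : ∀ t ∈ Finset.range A.length,
      (if B.getD t false then (1:ℤ) else -1) ≤ (if A.getD t false then (1:ℤ) else -1) := by
    intro t ht
    have h := hle t (Finset.mem_range.mp ht)
    cases hA : A.getD t false <;> cases hB : B.getD t false <;> simp_all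
  have hsum' : ∑ t ∈ Finset.range A.length, (if B.getD t false then (1:ℤ) else -1) =
      ∑ t ∈ Finset.range A.length, (if A.getD t false then (1:ℤ) else -1) := by
    unfold strGraph at hsum
    rw [← hlen] at hsum
    exact hsum.symm
  have heq := (Finset.sum_eq_sum_iff_of_le key).mp hsum'
  apply List.ext_getElem hlen
  intro n h1 h2
  have hn := heq n (Finset.mem_range.mpr h1)
  rw [List.getD_eq_getElem A false h1, List.getD_eq_getElem B false h2] at hn
  cases hA : A[n] <;> cases hB : B[n] <;> simp_all

/-- Distinct balanced strings of equal length that are strictly Catalan and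
`2`-maximal satisfy `r ✦₁ s`: every pair of cyclic shifts realizes both
coordinate tuples `(0,1)` and `(1,0)`. -/
theorem strictlyCatalan_twoMaximal_blacklozenge_one (r s : List Bool)
    (hlen : r.length = s.length)
    (hrC : StrictlyCatalan r) (hsC : StrictlyCatalan s)
    (hrM : TMaximal r 2) (hsM : TMaximal s 2)
    (hne : r ≠ s) :
    ∀ i j : ℕ,
      ((false, true) ∈ (cycShift i r).zip (cycShift j s)) ∧
      ((true, false) ∈ (cycShift i r).zip (cycShift j s)) := by
  intro i j
  rcases Nat.eq_zero_or_pos r.length with h0 | hpos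
  · refine absurd ?_ hne
    have hr0 : r = [] := List.eq_nil_of_length_eq_zero h0
    have hs0 : s = [] := List.eq_nil_of_length_eq_zero (by omega)
    rw [hr0, hs0]
  have hspos : 0 < s.length := hlen ▸ hpos
  have hAl : (cycShift i r).length = r.length := length_cycShift i r
  have hBl : (cycShift j s).length = s.length := length_cycShift j s
  have hAB : (cycShift i r).length = (cycShift j s).length := by rw [hAl, hBl, hlen]
  have hAg : strGraph (cycShift i r) (cycShift i r).length = 0 := by
    rw [hAl]
    show strGraph (r.drop (i % r.length) ++ r.take (i % r.length)) r.length = 0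
    rw [strGraph_drop_take_full r _ (Nat.mod_lt i hpos).le, hrC.1]
  have hBg : strGraph (cycShift j s) (cycShift j s).length = 0 := by
    rw [hBl]
    show strGraph (s.drop (j % s.length) ++ s.take (j % s.length)) s.length = 0
    rw [strGraph_drop_take_full s _ (Nat.mod_lt j hspos).le, hsC.1]
  have hne' := shifts_ne r s hlen hrC hsC hne i j
  constructor
  · by_contra hmem
    apply hne'
    apply eq_of_pointwise_le _ _ hAB (by rw [hAg, hBg])
    intro t ht hBt
    by_contra hAt
    apply hmem
    have htB : t < (cycShift j s).length := hAB ▸ ht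
    have hzip : t < ((cycShift i r).zip (cycShift j s)).length := by
      rw [List.length_zip]; omega
    have hAf : (cycShift i r).getD t false = false := Bool.eq_false_iff.mpr hAt
    have e : ((cycShift i r).zip (cycShift j s))[t]'hzip = (false, true) := by
      rw [List.getElem_zip, ← List.getD_eq_getElem (cycShift i r) false ht,
        ← List.getD_eq_getElem (cycShift j s) false htB, hBt, hAf]
    exact e ▸ List.getElem_mem hzip
  · by_contra hmem
    apply hne'
    refine (eq_of_pointwise_le _ _ hAB.symm (by rw [hAg, hBg]) ?_).symm
    intro t ht hAt
    by_contra hBt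
    apply hmem
    have htA : t < (cycShift i r).length := hAB ▸ ht
    have hzip : t < ((cycShift i r).zip (cycShift j s)).length := by
      rw [List.length_zip]; omega
    have hBf : (cycShift j s).getD t false = false := Bool.eq_false_iff.mpr hBt
    have e : ((cycShift i r).zip (cycShift j s))[t]'hzip = (true, false) := by
      rw [List.getElem_zip, ← List.getD_eq_getElem (cycShift i r) false htA,
        ← List.getD_eq_getElem (cycShift j s) false ht, hBf, hAt]
    exact e ▸ List.getElem_mem hzip
end

section
/- Any synchronous (n,2)-schedule guaranteeing rendezvous within T time steps must satisfy e·(2^T)! ≥ n; consequently R_s(n,2) = Ω(log log n). -/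
private lemma two_pow_le_exp_mul_factorial (m : ℕ) :
    (2 : ℝ) ^ m ≤ Real.exp 1 * (Nat.factorial m) := by
  have h2e : (2 : ℝ) ≤ Real.exp 1 := by
    have := Real.add_one_le_exp (1 : ℝ); linarith
  induction m with
  | zero => simp only [pow_zero, Nat.factorial_zero, Nat.cast_one, mul_one]; linarith
  | succ k ih =>
    rcases Nat.eq_zero_or_pos k with hk | hk
    · subst hk; simpa using h2e
    · have hfac : (Nat.factorial (k+1) : ℝ) = (k+1) * Nat.factorial k := by
        push_cast [Nat.factorial_succ]; ring
      have hfk : (0:ℝ) < Nat.factorial k := by positivity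
      have hk2 : (2:ℝ) ≤ (k+1 : ℕ) := by exact_mod_cast Nat.succ_le_succ hk
      have he : (0:ℝ) < Real.exp 1 := Real.exp_pos 1
      calc (2:ℝ) ^ (k+1) = 2 * 2 ^ k := by ring
        _ ≤ 2 * (Real.exp 1 * Nat.factorial k) := by
            have h2k : (0:ℝ) ≤ 2 ^ k := by positivity
            nlinarith
        _ ≤ Real.exp 1 * Nat.factorial (k+1) := by
            rw [hfac]
            have hk1 : (1:ℝ) ≤ (k:ℝ) := by exact_mod_cast hk
            nlinarith [mul_nonneg (mul_nonneg he.le hfk.le) (sub_nonneg.2 hk1)]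

/-- Any synchronous `(n,2)`-schedule (a bit string in `{0,1}^T` for each pair
`i < j` in `[n]`, where `0` means hopping on the smaller channel and `1` on the
larger) that guarantees rendezvous within `T` steps for every pair of
overlapping two-element sets must satisfy `e·(2^T)! ≥ n`; consequently
`R_s(n,2) = Ω(log log n)`. -/
theorem lower_bound_size_two : ∃ c : ℝ, 0 < c ∧
    ∀ (n T : ℕ) (σ : ℕ → ℕ → ℕ → Bool),
      (∀ i j i' j' : ℕ, 1 ≤ i → i < j → j ≤ n → 1 ≤ i' → i' < j' → j' ≤ n →
        (({i, j} : Finset ℕ) ∩ {i', j'}).Nonempty →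
        ∃ t < T, (if σ i j t then j else i) = (if σ i' j' t then j' else i')) →
      ((n : ℝ) ≤ Real.exp 1 * (Nat.factorial (2 ^ T)) ∧
        (3 ≤ n → c * Real.log (Real.log n) ≤ (T : ℝ))) := by
  classical
  refine ⟨1, one_pos, fun n T σ h => ?_⟩
  -- Core combinatorial bound: n ≤ 2 ^ (2 ^ T)
  have key : n ≤ 2 ^ (2 ^ T) := by
    set D : ℕ → Finset (Fin T → Bool) :=
      fun v => Finset.univ.filter
        (fun c => ∃ u ∈ Finset.Ico 1 v, (fun t : Fin T => σ u v t.1) = c) with hD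
    have hlt : ∀ i j : ℕ, 1 ≤ i → i < j → j ≤ n → D i ≠ D j := by
      intro i j hi hij hjn heq
      set c : Fin T → Bool := fun t => σ i j t.1 with hc
      have hcj : c ∈ D j := by
        rw [hD]
        simp only [Finset.mem_filter, Finset.mem_univ, true_and]
        exact ⟨i, Finset.mem_Ico.2 ⟨hi, hij⟩, rfl⟩
      have hci : c ∉ D i := by
        rw [hD]
        simp only [Finset.mem_filter, Finset.mem_univ, true_and]
        rintro ⟨u, hu, hequ⟩
        rw [Finset.mem_Ico] at hu
        obtain ⟨hu1, hui⟩ := hu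
        obtain ⟨t, ht, hmeet⟩ := h u i i j hu1 hui (le_of_lt (lt_of_lt_of_le hij hjn))
          hi hij hjn ⟨i, by simp⟩
        have hσ : σ u i t = σ i j t := by
          have := congrFun hequ ⟨t, ht⟩
          simpa [hc] using this
        rw [hσ] at hmeet
        cases hb : σ i j t <;> rw [hb] at hmeet <;> simp at hmeet <;> omega
      rw [heq] at hci
      exact hci hcj
    have hinj : Set.InjOn D (Finset.Icc 1 n) := by
      intro i hi j hj heq
      simp only [Finset.coe_Icc, Set.mem_Icc] at hi hj
      rcases lt_trichotomy i j with hij | hij | hij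
      · exact absurd heq (hlt i j hi.1 hij hj.2)
      · exact hij
      · exact absurd heq.symm (hlt j i hj.1 hij hi.2)
    have hcard := Finset.card_le_card_of_injOn D
      (fun a _ => Finset.mem_univ (D a)) hinj
    have h1 : (Finset.Icc 1 n).card = n := by simp
    have h2 : (Finset.univ : Finset (Finset (Fin T → Bool))).card = 2 ^ (2 ^ T) := by
      rw [Finset.card_univ, Fintype.card_finset]
      simp
    rw [h1, h2] at hcard
    exact hcard
  constructor
  · have h1 : (n : ℝ) ≤ (2 : ℝ) ^ (2 ^ T) := by exact_mod_cast key
    exact le_trans h1 (two_pow_le_exp_mul_factorial (2 ^ T))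
  · intro hn3
    have hn3' : (3 : ℝ) ≤ n := by exact_mod_cast hn3
    have hlogn : (1 : ℝ) < Real.log n := by
      have : Real.exp 1 < 3 := by
        have := Real.exp_one_lt_d9; linarith
      calc (1:ℝ) = Real.log (Real.exp 1) := by rw [Real.log_exp]
        _ < Real.log n := Real.log_lt_log (Real.exp_pos 1) (lt_of_lt_of_le this hn3')
    have hln : Real.log n ≤ (2 : ℝ) ^ T * Real.log 2 := by
      have h1 : (n : ℝ) ≤ (2 : ℝ) ^ (2 ^ T) := by exact_mod_cast key
      calc Real.log n ≤ Real.log ((2:ℝ) ^ (2 ^ T)) :=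
            Real.log_le_log (by linarith) h1
        _ = (2 ^ T : ℕ) * Real.log 2 := by rw [Real.log_pow]
        _ = (2 : ℝ) ^ T * Real.log 2 := by push_cast; ring
    have hlog2_pos : (0:ℝ) < Real.log 2 := Real.log_pos (by norm_num)
    have hlog2_lt1 : Real.log 2 < 1 := by
      have := Real.log_two_lt_d9; linarith
    have hpos : (0:ℝ) < (2 : ℝ) ^ T * Real.log 2 := by positivity
    have step : Real.log (Real.log n) ≤ Real.log ((2:ℝ) ^ T * Real.log 2) :=
      Real.log_le_log (by linarith) hln
    have expand : Real.log ((2:ℝ) ^ T * Real.log 2)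
        = T * Real.log 2 + Real.log (Real.log 2) := by
      rw [Real.log_mul (by positivity) (ne_of_gt hlog2_pos), Real.log_pow]
    have hneg : Real.log (Real.log 2) < 0 := Real.log_neg hlog2_pos hlog2_lt1
    have hT : (T : ℝ) * Real.log 2 ≤ T := by
      have hT0 : (0:ℝ) ≤ T := Nat.cast_nonneg T
      nlinarith
    rw [one_mul]
    calc Real.log (Real.log n) ≤ T * Real.log 2 + Real.log (Real.log 2) := by
          rw [← expand]; exact step
      _ ≤ (T : ℝ) := by linarith
end

section
/- If the edges of the complete graph K_n are colored with m colors and n ≥ e·m!, then there exists a monochromatic triangle; in particular there exist i < j < k such that edges {i,j} and {j,k} receive the same color. -/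
open Finset

/-- `ram m = ∑_{k=0}^m m!/k!`, the key quantity with `ram m < e·m!`. -/
def ram : ℕ → ℕ
  | 0 => 1
  | m + 1 => (m + 1) * ram m + 1

lemma ram_eq (m : ℕ) :
    (ram m : ℝ) = (Nat.factorial m : ℝ) * ∑ k ∈ range (m + 1), (1 : ℝ) / k.factorial := by
  induction m with
  | zero => simp [ram]
  | succ m ih =>
      rw [Finset.sum_range_succ]
      have hfact : (Nat.factorial (m+1) : ℝ) = (m+1) * Nat.factorial m := by
        push_cast [Nat.factorial_succ]; ring
      have hne : (Nat.factorial (m+1) : ℝ) ≠ 0 := by positivity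
      have : (ram (m+1) : ℝ) = (m+1) * ram m + 1 := by
        rw [show ram (m+1) = (m+1) * ram m + 1 from rfl]; push_cast; ring
      rw [this, ih, hfact]
      field_simp

lemma ram_lt (m : ℕ) : (ram m : ℝ) < Real.exp 1 * (Nat.factorial m : ℝ) := by
  have hsum : ∑ k ∈ range (m + 2), (1:ℝ) ^ k / k.factorial ≤ Real.exp 1 :=
    Real.sum_le_exp_of_nonneg zero_le_one (m + 2)
  simp only [one_pow] at hsum
  rw [Finset.sum_range_succ] at hsum
  have hpos : (0:ℝ) < 1 / (Nat.factorial (m+1)) := by positivity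
  have h1 : ∑ k ∈ range (m + 1), (1:ℝ) / k.factorial < Real.exp 1 := by linarith
  have hfpos : (0:ℝ) < (Nat.factorial m : ℝ) := by positivity
  rw [ram_eq]
  calc (Nat.factorial m : ℝ) * ∑ k ∈ range (m + 1), (1:ℝ) / k.factorial
      < (Nat.factorial m : ℝ) * Real.exp 1 := by
        exact (mul_lt_mul_iff_right₀ hfpos).mpr h1
    _ = Real.exp 1 * (Nat.factorial m : ℝ) := mul_comm _ _

/-- Key combinatorial lemma, by induction on the number of colors. -/
lemma ram_aux : ∀ (m : ℕ) (C S : Finset ℕ) (χ : ℕ → ℕ → ℕ),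
    (∀ i j, χ i j = χ j i) →
    (∀ i ∈ S, ∀ j ∈ S, i ≠ j → χ i j ∈ C) →
    C.card ≤ m → ram m + 1 ≤ S.card →
    ∃ i ∈ S, ∃ j ∈ S, ∃ k ∈ S, i < j ∧ j < k ∧ χ i j = χ j k ∧ χ i j = χ i k := by
  intro m
  induction m with
  | zero =>
      intro C S χ hsym hmem hC hS
      have hC0 : C = ∅ := Finset.card_eq_zero.mp (Nat.le_zero.mp hC)
      have h2 : 1 < S.card := by simp [ram] at hS; omega
      obtain ⟨i, hi, j, hj, hij⟩ := Finset.one_lt_card.mp h2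
      exact absurd (hmem i hi j hj hij) (by simp [hC0])
  | succ m ih =>
      intro C S χ hsym hmem hC hS
      have hScard : (m + 1) * ram m + 2 ≤ S.card := by
        rw [show ram (m+1) = (m+1) * ram m + 1 from rfl] at hS; omega
      have hSne : S.Nonempty := Finset.card_pos.mp (by omega)
      set v := S.min' hSne with hv
      have hvS : v ∈ S := S.min'_mem hSne
      set T := S.erase v with hT
      have hTcard : (m + 1) * ram m + 1 ≤ T.card := by
        rw [hT, Finset.card_erase_of_mem hvS]; omega
      have hmaps : ∀ u ∈ T, χ v u ∈ C := by
        intro u hu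
        exact hmem v hvS u (Finset.mem_of_mem_erase hu)
          (Ne.symm (Finset.ne_of_mem_erase hu))
      have hlt : C.card * ram m < T.card := by
        have : C.card * ram m ≤ (m + 1) * ram m := Nat.mul_le_mul_right _ hC
        omega
      obtain ⟨c, hcC, hcard⟩ :=
        Finset.exists_lt_card_fiber_of_mul_lt_card_of_maps_to hmaps hlt
      set P := T.filter (fun u => χ v u = c) with hP
      have hPsub : P ⊆ S := (Finset.filter_subset _ _).trans (Finset.erase_subset _ _)
      have hvltP : ∀ u ∈ P, v < u := by
        intro u hu
        have huS : u ∈ S := hPsub hu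
        have hne : u ≠ v := Finset.ne_of_mem_erase (Finset.mem_of_mem_filter u hu)
        exact lt_of_le_of_ne (S.min'_le u huS) (Ne.symm hne)
      have hPc : ∀ u ∈ P, χ v u = c := by
        intro u hu; exact (Finset.mem_filter.mp hu).2
      by_cases hmono : ∃ u ∈ P, ∃ w ∈ P, u ≠ w ∧ χ u w = c
      · obtain ⟨u, hu, w, hw, huw, hcuw⟩ := hmono
        rcases lt_or_gt_of_ne huw with h | h
        · exact ⟨v, hvS, u, hPsub hu, w, hPsub hw, hvltP u hu, h, by
            rw [hPc u hu, hcuw], by rw [hPc u hu, hPc w hw]⟩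
        · exact ⟨v, hvS, w, hPsub hw, u, hPsub hu, hvltP w hw, h, by
            rw [hPc w hw, hsym w u, hcuw], by rw [hPc w hw, hPc u hu]⟩
      · push_neg at hmono
        have hmem' : ∀ i ∈ P, ∀ j ∈ P, i ≠ j → χ i j ∈ C.erase c := by
          intro i hi j hj hij
          exact Finset.mem_erase.mpr ⟨hmono i hi j hj hij,
            hmem i (hPsub hi) j (hPsub hj) hij⟩
        have hC' : (C.erase c).card ≤ m := by
          have := Finset.card_erase_of_mem hcC
          have hCpos : 1 ≤ C.card := Finset.card_pos.mpr ⟨c, hcC⟩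
          omega
        obtain ⟨i, hi, j, hj, k, hk, h1, h2, h3, h4⟩ :=
          ih (C.erase c) P χ hsym hmem' hC' hcard
        exact ⟨i, hPsub hi, j, hPsub hj, k, hPsub hk, h1, h2, h3, h4⟩

/-- If the edges of `K_n` are colored with `m` colors and `n ≥ e·m!`, then there
is a monochromatic triangle; in particular there are `i < j < k` such that the
edges `{i,j}` and `{j,k}` get the same color. -/
theorem monochromatic_triangle (n m : ℕ) (χ : ℕ → ℕ → Fin m)
    (hχ : ∀ i j, χ i j = χ j i)
    (hn : Real.exp 1 * (Nat.factorial m) ≤ (n : ℝ)) :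
    ∃ i j k : ℕ, 1 ≤ i ∧ i < j ∧ j < k ∧ k ≤ n ∧
      χ i j = χ j k ∧ χ i j = χ i k := by
  rcases Nat.eq_zero_or_pos m with rfl | hm
  · exact (χ 0 0).elim0
  · have hramn : (ram m : ℝ) < (n : ℝ) := lt_of_lt_of_le (ram_lt m) hn
    have hn' : ram m + 1 ≤ n := by exact_mod_cast Nat.add_one_le_iff.mpr (by exact_mod_cast hramn)
    set S : Finset ℕ := Finset.Icc 1 n with hSdef
    have hScard : ram m + 1 ≤ S.card := by
      rw [hSdef, Nat.card_Icc]; omega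
    have hmem : ∀ i ∈ S, ∀ j ∈ S, i ≠ j → (fun i j => (χ i j : ℕ)) i j ∈ Finset.range m := by
      intro i _ j _ _
      exact Finset.mem_range.mpr (χ i j).isLt
    obtain ⟨i, hi, j, hj, k, hk, h1, h2, h3, h4⟩ :=
      ram_aux m (Finset.range m) S (fun i j => (χ i j : ℕ))
        (fun i j => by simp [hχ i j]) hmem (by simp) hScard
    refine ⟨i, j, k, (Finset.mem_Icc.mp hi).1, h1, h2, (Finset.mem_Icc.mp hk).2,
      Fin.ext h3, Fin.ext h4⟩
end

section
/- Let 1 ≤ α ≤ k and n ≥ k^{2α}. Then any synchronous (n,k)-schedule requires at least αk time steps for rendezvous: R_s(n,k) ≥ αk. -/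
/-- Let `1 ≤ α ≤ k` and `n ≥ k^(2α)`. Any `(n,k)`-schedule guaranteeing
synchronous rendezvous within `T` steps for every pair of overlapping
`k`-subsets of `[n]` must have `T ≥ αk`. -/
theorem lower_bound_synchronous (n k α T : ℕ) (hα1 : 1 ≤ α) (hαk : α ≤ k)
    (hn : k ^ (2 * α) ≤ n)
    (σ : Finset ℕ → ℕ → ℕ)
    (hmem : ∀ A : Finset ℕ, A ⊆ Finset.Icc 1 n → A.card = k → ∀ t, σ A t ∈ A)
    (hrdv : ∀ A B : Finset ℕ, A ⊆ Finset.Icc 1 n → B ⊆ Finset.Icc 1 n →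
      A.card = k → B.card = k → (A ∩ B).Nonempty → ∃ t < T, σ A t = σ B t) :
    α * k ≤ T := by
  by_contra hT
  push_neg at hT
  have hk1 : 1 ≤ k := hα1.trans hαk
  set m := n / k with hm
  set A : ℕ → Finset ℕ := fun i => Finset.Icc (i*k+1) (i*k+k) with hA
  have hAcard : ∀ i, (A i).card = k := by
    intro i; simp [hA, Nat.card_Icc]
  have hAsub : ∀ i, i < m → A i ⊆ Finset.Icc 1 n := by
    intro i him x hx
    simp only [hA, Finset.mem_Icc] at hx ⊢
    have h1 : (i+1) * k ≤ m * k := Nat.mul_le_mul_right k him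
    have h2 : m * k ≤ n := Nat.div_mul_le_self n k
    constructor <;> nlinarith
  have hAdisj : ∀ i j, i ≠ j → ∀ x, x ∈ A i → x ∈ A j → False := by
    intro i j hij x hxi hxj
    simp only [hA, Finset.mem_Icc] at hxi hxj
    rcases Nat.lt_or_ge i j with h | h
    · have h1 : (i+1) * k ≤ j * k := Nat.mul_le_mul_right k h
      nlinarith
    · have h' : j < i := lt_of_le_of_ne h (Ne.symm hij)
      have h1 : (j+1) * k ≤ i * k := Nat.mul_le_mul_right k h'
      nlinarith
  -- choose a channel used fewer than α times in each block
  have hcex : ∀ i, ∃ c, i < m → c ∈ A i ∧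
      ((Finset.range T).filter (fun t => σ (A i) t = c)).card < α := by
    intro i
    by_cases him : i < m
    · have : ∃ c ∈ A i,
          ((Finset.range T).filter (fun t => σ (A i) t = c)).card < α := by
        by_contra hall
        push_neg at hall
        have hsum := Finset.card_eq_sum_card_fiberwise
          (s := Finset.range T) (t := A i) (f := σ (A i))
          (fun t _ => hmem (A i) (hAsub i him) (hAcard i) t)
        have hle : (A i).card * α ≤
            ∑ c ∈ A i, ((Finset.range T).filter (fun t => σ (A i) t = c)).card := by
          calc (A i).card * α = ∑ _c ∈ A i, α := by rw [Finset.sum_const, smul_eq_mul]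
            _ ≤ _ := Finset.sum_le_sum (fun c hc => hall c hc)
        rw [hAcard i] at hle
        rw [Finset.card_range] at hsum
        have hcomm : α * k = k * α := Nat.mul_comm α k
        omega
      obtain ⟨c, hc1, hc2⟩ := this
      exact ⟨c, fun _ => ⟨hc1, hc2⟩⟩
    · exact ⟨0, fun h => absurd h him⟩
  choose c hc using hcex
  -- extend the occurrence sets to size α - 1 inside range (α*k - 1)
  have hαkα : α ≤ α * k := Nat.le_mul_of_pos_right α hk1
  have hSex : ∀ i, ∃ S, i < m →
      ((Finset.range T).filter (fun t => σ (A i) t = c i) ⊆ S ∧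
        S ⊆ Finset.range (α*k - 1) ∧ S.card = α - 1) := by
    intro i
    by_cases him : i < m
    · obtain ⟨hcA, hcct⟩ := hc i him
      have hsub : (Finset.range T).filter (fun t => σ (A i) t = c i) ⊆
          Finset.range (α*k - 1) := by
        intro t ht
        simp only [Finset.mem_filter, Finset.mem_range] at ht ⊢
        omega
      obtain ⟨u, hu1, hu2, hu3⟩ := Finset.exists_subsuperset_card_eq (n := α - 1)
        hsub (by omega) (by rw [Finset.card_range]; omega)
      exact ⟨u, fun _ => ⟨hu1, hu2, hu3⟩⟩
    · exact ⟨∅, fun h => absurd h him⟩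
  choose S hS using hSex
  -- pigeonhole
  have hmaps : ∀ i ∈ Finset.range m, S i ∈
      Finset.powersetCard (α-1) (Finset.range (α*k-1)) := by
    intro i hi
    rw [Finset.mem_range] at hi
    obtain ⟨_, h2, h3⟩ := hS i hi
    exact Finset.mem_powersetCard.2 ⟨h2, h3⟩
  have hmlb : k ^ (2*α - 1) ≤ m := by
    have h1 : k ^ (2*α - 1) * k = k ^ (2*α) := by
      rw [← pow_succ]; congr 1; omega
    rw [hm, Nat.le_div_iff_mul_le hk1, h1]; exact hn
  have hcb : (α*k - 1).choose (α - 1) ≤ k ^ (2*α - 2) := by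
    calc (α*k - 1).choose (α - 1) ≤ (α*k - 1) ^ (α - 1) := Nat.choose_le_pow _ _
      _ ≤ (k*k) ^ (α - 1) := Nat.pow_le_pow_left
          (by have := Nat.mul_le_mul_right k hαk; omega) _
      _ = k ^ (2*α - 2) := by rw [← pow_two, ← pow_mul]; congr 1; omega
  have hcard : (Finset.powersetCard (α-1) (Finset.range (α*k-1))).card * (k-1)
      < (Finset.range m).card := by
    rw [Finset.card_powersetCard, Finset.card_range, Finset.card_range]
    calc (α*k - 1).choose (α - 1) * (k-1) ≤ k ^ (2*α - 2) * (k-1) :=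
          Nat.mul_le_mul_right _ hcb
      _ < k ^ (2*α - 2) * k := by
          have : 0 < k ^ (2*α - 2) := Nat.pow_pos hk1
          exact (Nat.mul_lt_mul_left this).2 (by omega)
      _ = k ^ (2*α - 1) := by rw [← pow_succ]; congr 1; omega
      _ ≤ m := hmlb
  obtain ⟨y, _, hfib⟩ :=
    Finset.exists_lt_card_fiber_of_mul_lt_card_of_maps_to hmaps hcard
  obtain ⟨I, hIsub, hIcard⟩ := Finset.exists_subset_card_eq
    (s := (Finset.range m).filter (fun x => S x = y)) (n := k) (by omega)
  have hImem : ∀ i ∈ I, i < m ∧ S i = y := by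
    intro i hi
    have := hIsub hi
    simp only [Finset.mem_filter, Finset.mem_range] at this
    exact this
  -- the adversary set B
  set B : Finset ℕ := I.image c with hB
  have hcinj : ∀ i ∈ I, ∀ j ∈ I, c i = c j → i = j := by
    intro i hi j hj hcij
    by_contra hij
    exact hAdisj i j hij (c i) (hc i (hImem i hi).1).1
      (hcij ▸ (hc j (hImem j hj).1).1)
  have hBcard : B.card = k := by
    rw [hB, Finset.card_image_of_injOn (fun i hi j hj => hcinj i hi j hj), hIcard]
  have hBsub : B ⊆ Finset.Icc 1 n := by
    intro x hx
    rw [hB, Finset.mem_image] at hx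
    obtain ⟨i, hi, rfl⟩ := hx
    exact hAsub i (hImem i hi).1 (hc i (hImem i hi).1).1
  -- rendezvous times
  have hτex : ∀ i, ∃ t, i ∈ I →
      (t < T ∧ σ (A i) t = c i ∧ σ B t = c i) := by
    intro i
    by_cases hi : i ∈ I
    · have him := (hImem i hi).1
      obtain ⟨t, htT, hteq⟩ := hrdv (A i) B (hAsub i him) hBsub (hAcard i) hBcard
        ⟨c i, Finset.mem_inter.2 ⟨(hc i him).1,
          hB ▸ Finset.mem_image.2 ⟨i, hi, rfl⟩⟩⟩
      have hvB : σ B t ∈ B := hmem B hBsub hBcard t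
      have hvA : σ (A i) t ∈ A i := hmem (A i) (hAsub i him) (hAcard i) t
      rw [hB, Finset.mem_image] at hvB
      obtain ⟨j, hj, hjv⟩ := hvB
      have hji : j = i := by
        by_contra hji
        exact hAdisj j i hji (σ B t) (hjv ▸ (hc j (hImem j hj).1).1) (hteq ▸ hvA)
      subst hji
      exact ⟨t, fun _ => ⟨htT, hteq.trans hjv.symm, hjv.symm⟩⟩
    · exact ⟨0, fun h => absurd h hi⟩
  choose τ hτ using hτex
  have hmaps2 : ∀ i ∈ I, τ i ∈ y := by
    intro i hi
    obtain ⟨him, hSy⟩ := hImem i hi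
    obtain ⟨htT, htA, _⟩ := hτ i hi
    have : τ i ∈ (Finset.range T).filter (fun t => σ (A i) t = c i) := by
      simp [Finset.mem_filter, Finset.mem_range, htT, htA]
    exact hSy ▸ (hS i him).1 this
  have hinj2 : ∀ i ∈ I, ∀ j ∈ I, τ i = τ j → i = j := by
    intro i hi j hj hτij
    apply hcinj i hi j hj
    have h1 := (hτ i hi).2.2
    have h2 := (hτ j hj).2.2
    rw [← h1, ← h2, hτij]
  have hky : k ≤ y.card := by
    rw [← hIcard]
    exact Finset.card_le_card_of_injOn τ hmaps2 (fun i hi j hj => hinj2 i hi j hj)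
  have hycard : y.card = α - 1 := by
    obtain ⟨i, hi⟩ := Finset.card_pos.1 (show 0 < I.card by omega)
    obtain ⟨him, hSy⟩ := hImem i hi
    rw [← hSy]; exact (hS i him).2.2
  omega
end
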